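/- arXiv:1401.3781 — 2 statements merged into one kernel-verified Lean document; each statement's English description precedes it below -/
import Mathlib

section
/- Let v = 1, μ > 0 and s ∈ ℝ. Then the equation (1 − Φ(x)) / (Φ_{μ,1}(s) − Φ_{μ,1}(x)) = N(x) / N_{μ,1}(x) has a unique real solution β_{μ,1,s}, and this solution satisfies β_{μ,1,s} < s. -/
open MeasureTheory Real

/-- Density of the normal distribution with mean `μ` and variance `v`. -/
noncomputable def nPDF (μ v x : ℝ) : ℝ :=
  (Real.sqrt (2 * Real.pi * v))⁻¹ * Real.exp (-(x - μ) ^ 2 / (2 * v))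

/-- Cumulative distribution function of the normal distribution with mean `μ`
and variance `v`. -/
noncomputable def nCDF (μ v x : ℝ) : ℝ := ∫ t in Set.Iic x, nPDF μ v t

lemma nPDF_eq_gaussian (μ : ℝ) : nPDF μ 1 = ProbabilityTheory.gaussianPDFReal μ 1 := by
  ext x
  simp [nPDF, ProbabilityTheory.gaussianPDFReal]

lemma nPDF_pos (μ x : ℝ) : 0 < nPDF μ 1 x := by
  rw [nPDF_eq_gaussian]
  exact ProbabilityTheory.gaussianPDFReal_pos μ 1 x one_ne_zero

lemma integrable_nPDF (μ : ℝ) : Integrable (nPDF μ 1) := by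
  rw [nPDF_eq_gaussian]; exact ProbabilityTheory.integrable_gaussianPDFReal μ 1

lemma integral_nPDF (μ : ℝ) : ∫ x, nPDF μ 1 x = 1 := by
  rw [nPDF_eq_gaussian]; exact ProbabilityTheory.integral_gaussianPDFReal_eq_one μ one_ne_zero

lemma continuous_nPDF (μ : ℝ) : Continuous (nPDF μ 1) := by
  unfold nPDF; fun_prop

lemma nCDF_eq (μ x : ℝ) : nCDF μ 1 x = nCDF μ 1 0 + ∫ t in (0:ℝ)..x, nPDF μ 1 t := by
  rw [← intervalIntegral.integral_Iic_sub_Iic ((integrable_nPDF μ).integrableOn)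
    ((integrable_nPDF μ).integrableOn)]
  unfold nCDF; ring

lemma hasDerivAt_nCDF (μ x : ℝ) : HasDerivAt (nCDF μ 1) (nPDF μ 1 x) x := by
  have h := ((continuous_nPDF μ).integral_hasStrictDerivAt 0 x).hasDerivAt
  have : nCDF μ 1 = fun u => nCDF μ 1 0 + ∫ t in (0:ℝ)..u, nPDF μ 1 t := by
    ext u; exact nCDF_eq μ u
  rw [this]
  exact (h.const_add (nCDF μ 1 0))

lemma strictMono_nCDF (μ : ℝ) : StrictMono (nCDF μ 1) := by
  apply strictMono_of_deriv_pos
  intro x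
  rw [(hasDerivAt_nCDF μ x).deriv]
  exact nPDF_pos μ x

lemma nCDF_pos (μ x : ℝ) : 0 < nCDF μ 1 x := by
  have h1 : nCDF μ 1 (x - 1) < nCDF μ 1 x := strictMono_nCDF μ (by linarith)
  have h0 : 0 ≤ nCDF μ 1 (x - 1) :=
    setIntegral_nonneg measurableSet_Iic (fun t _ => (nPDF_pos μ t).le)
  linarith

lemma nCDF_lt_one (μ x : ℝ) : nCDF μ 1 x < 1 := by
  have := intervalIntegral.integral_Iic_add_Ioi (μ := volume) ((integrable_nPDF μ).integrableOn (s := Set.Iic x))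
    ((integrable_nPDF μ).integrableOn (s := Set.Ioi x))
  rw [integral_nPDF μ] at this
  have hpos : 0 < ∫ t in Set.Ioi x, nPDF μ 1 t := by
    have h1 : nCDF μ 1 x < nCDF μ 1 (x + 1) := strictMono_nCDF μ (by linarith)
    have h2 : ∫ t in Set.Ioc x (x+1), nPDF μ 1 t ≤ ∫ t in Set.Ioi x, nPDF μ 1 t := by
      apply setIntegral_mono_set ((integrable_nPDF μ).integrableOn)
        (ae_of_all _ fun t => (nPDF_pos μ t).le)
      exact HasSubset.Subset.eventuallyLE Set.Ioc_subset_Ioi_self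
    have h3 : nCDF μ 1 (x+1) - nCDF μ 1 x = ∫ t in Set.Ioc x (x+1), nPDF μ 1 t := by
      unfold nCDF
      rw [intervalIntegral.integral_Iic_sub_Iic ((integrable_nPDF μ).integrableOn)
        ((integrable_nPDF μ).integrableOn), intervalIntegral.integral_of_le (by linarith)]
    linarith
  unfold nCDF
  linarith

lemma nCDF_tail (μ x : ℝ) :
    nCDF μ 1 x ≤ (Real.sqrt (2*Real.pi*1))⁻¹ * Real.exp (1/2) * (Real.exp (-μ) * Real.exp x) := by
  have hc : (0:ℝ) ≤ (Real.sqrt (2*Real.pi*1))⁻¹ * Real.exp (1/2) * Real.exp (-μ) := by positivity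
  have hpt : ∀ t : ℝ, nPDF μ 1 t ≤
      (Real.sqrt (2*Real.pi*1))⁻¹ * Real.exp (1/2) * Real.exp (-μ) * Real.exp t := by
    intro t
    have h1 : Real.exp (-(t-μ)^2/(2*1)) ≤ Real.exp (1/2) * (Real.exp (-μ) * Real.exp t) := by
      rw [← Real.exp_add, ← Real.exp_add]
      apply Real.exp_le_exp.mpr
      nlinarith [sq_nonneg (t - μ + 1)]
    have hc0 : (0:ℝ) ≤ (Real.sqrt (2*Real.pi*1))⁻¹ := by positivity
    calc nPDF μ 1 t = (Real.sqrt (2*Real.pi*1))⁻¹ * Real.exp (-(t-μ)^2/(2*1)) := rfl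
      _ ≤ (Real.sqrt (2*Real.pi*1))⁻¹ * (Real.exp (1/2) * (Real.exp (-μ) * Real.exp t)) :=
          mul_le_mul_of_nonneg_left h1 hc0
      _ = (Real.sqrt (2*Real.pi*1))⁻¹ * Real.exp (1/2) * Real.exp (-μ) * Real.exp t := by ring
  calc nCDF μ 1 x
      ≤ ∫ t in Set.Iic x, (Real.sqrt (2*Real.pi*1))⁻¹ * Real.exp (1/2) * Real.exp (-μ) * Real.exp t :=
        setIntegral_mono ((integrable_nPDF μ).integrableOn)
          ((integrableOn_exp_Iic x).const_mul _) hpt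
    _ = (Real.sqrt (2*Real.pi*1))⁻¹ * Real.exp (1/2) * Real.exp (-μ) * ∫ t in Set.Iic x, Real.exp t := by
        rw [integral_const_mul]
    _ = (Real.sqrt (2*Real.pi*1))⁻¹ * Real.exp (1/2) * (Real.exp (-μ) * Real.exp x) := by
        rw [integral_exp_Iic]; ring

lemma nPDF_div (μ x : ℝ) : nPDF 0 1 x / nPDF μ 1 x = Real.exp (μ^2/2 - μ*x) := by
  have h : nPDF 0 1 x = nPDF μ 1 x * Real.exp (μ^2/2 - μ*x) := by
    unfold nPDF
    rw [mul_assoc _ (Real.exp _) (Real.exp _), ← Real.exp_add]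
    congr 2
    ring
  rw [h, mul_comm, mul_div_assoc, div_self (nPDF_pos μ x).ne', mul_one]

set_option maxHeartbeats 1000000 in
/-- Lemma 2: for `v = 1` and `μ > 0`, the equation
`(1 − Φ(x)) / (Φ_{μ,1}(s) − Φ_{μ,1}(x)) = N(x) / N_{μ,1}(x)` has a unique real
solution `β`, and it satisfies `β < s`. -/
theorem unique_solution_eq_one (μ s : ℝ) (hμ : 0 < μ) :
    ∃ β : ℝ,
      (∀ x : ℝ,
        (1 - nCDF 0 1 x) / (nCDF μ 1 s - nCDF μ 1 x) = nPDF 0 1 x / nPDF μ 1 x ↔ x = β) ∧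
      β < s := by
  set H : ℝ → ℝ := fun x =>
    (1 - nCDF 0 1 x) * Real.exp (μ*x - μ^2/2) + (nCDF μ 1 x - nCDF μ 1 s) with hHdef
  have hderiv : ∀ x, HasDerivAt H
      (μ * ((1 - nCDF 0 1 x) * Real.exp (μ*x - μ^2/2))) x := by
    intro x
    have h1 : HasDerivAt (fun x => 1 - nCDF 0 1 x) (-(nPDF 0 1 x)) x :=
      (hasDerivAt_nCDF 0 x).const_sub 1
    have h2 : HasDerivAt (fun x => Real.exp (μ*x - μ^2/2)) (Real.exp (μ*x - μ^2/2) * μ) x := by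
      have hlin : HasDerivAt (fun x => μ*x - μ^2/2) μ x := by
        simpa using ((hasDerivAt_id x).const_mul μ).sub_const (μ^2/2)
      exact hlin.exp
    have h3 := (h1.mul h2).add ((hasDerivAt_nCDF μ x).sub_const (nCDF μ 1 s))
    refine h3.congr_deriv ?_
    have key : nPDF 0 1 x * Real.exp (μ*x - μ^2/2) = nPDF μ 1 x := by
      unfold nPDF
      rw [mul_assoc _ (Real.exp _) (Real.exp _), ← Real.exp_add]
      congr 2
      ring
    rw [← key]; ring
  have hmono : StrictMono H := by
    apply strictMono_of_deriv_pos
    intro x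
    rw [(hderiv x).deriv]
    have h1 : nCDF 0 1 x < 1 := nCDF_lt_one 0 x
    exact mul_pos hμ (mul_pos (by linarith) (Real.exp_pos _))
  have hcont : Continuous H :=
    Differentiable.continuous (fun x => (hderiv x).differentiableAt)
  have hHs : 0 < H s := by
    have h1 : nCDF 0 1 s < 1 := nCDF_lt_one 0 s
    have h2 := Real.exp_pos (μ*s - μ^2/2)
    simp only [hHdef, sub_self, add_zero]
    exact mul_pos (by linarith) h2
  obtain ⟨x₀, hx₀s, hHx₀⟩ : ∃ x₀, x₀ < s ∧ H x₀ < 0 := by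
    have hK : 0 < nCDF μ 1 s := nCDF_pos μ s
    set C : ℝ := (Real.sqrt (2*Real.pi*1))⁻¹ * Real.exp (1/2) * Real.exp (-μ) with hC
    have htend : Filter.Tendsto
        (fun x => Real.exp (μ*x - μ^2/2) + C * Real.exp x) Filter.atBot (nhds 0) := by
      have t1 : Filter.Tendsto (fun x : ℝ => μ*x - μ^2/2) Filter.atBot Filter.atBot :=
        Filter.tendsto_atBot_add_const_right _ (-(μ^2/2)) (Filter.tendsto_id.const_mul_atBot hμ)
          |>.congr (fun x => by simp only [id_eq]; ring)
      have e1 : Filter.Tendsto (fun x : ℝ => Real.exp (μ*x - μ^2/2)) Filter.atBot (nhds 0) :=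
        Real.tendsto_exp_atBot.comp t1
      have e2 : Filter.Tendsto (fun x : ℝ => C * Real.exp x) Filter.atBot (nhds 0) := by
        simpa using (Real.tendsto_exp_atBot.const_mul C)
      simpa using e1.add e2
    have hev : ∀ᶠ x in Filter.atBot,
        Real.exp (μ*x - μ^2/2) + C * Real.exp x < nCDF μ 1 s :=
      htend.eventually_lt_const hK
    obtain ⟨x₀, hx₀s, hbd⟩ := (Filter.eventually_lt_atBot s |>.and hev).exists
    refine ⟨x₀, hx₀s, ?_⟩
    have htail : nCDF μ 1 x₀ ≤ C * Real.exp x₀ := by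
      have := nCDF_tail μ x₀
      rw [hC]; linarith [nCDF_tail μ x₀]
    have hΦ : 0 < nCDF 0 1 x₀ := nCDF_pos 0 x₀
    have hΦ1 : nCDF 0 1 x₀ < 1 := nCDF_lt_one 0 x₀
    have hE := Real.exp_pos (μ*x₀ - μ^2/2)
    have hterm : (1 - nCDF 0 1 x₀) * Real.exp (μ*x₀ - μ^2/2) ≤ Real.exp (μ*x₀ - μ^2/2) := by
      calc (1 - nCDF 0 1 x₀) * Real.exp (μ*x₀ - μ^2/2)
          ≤ 1 * Real.exp (μ*x₀ - μ^2/2) := mul_le_mul_of_nonneg_right (by linarith) hE.le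
        _ = Real.exp (μ*x₀ - μ^2/2) := one_mul _
    simp only [hHdef]
    linarith
  obtain ⟨β, hβmem, hβeq⟩ := intermediate_value_Icc hx₀s.le hcont.continuousOn
    (Set.mem_Icc.mpr ⟨hHx₀.le, hHs.le⟩)
  have hβs : β < s := hmono.lt_iff_lt.mp (by rw [hβeq]; exact hHs)
  refine ⟨β, fun x => ?_, hβs⟩
  by_cases hxs : x < s
  · have hd : 0 < nCDF μ 1 s - nCDF μ 1 x := sub_pos.mpr (strictMono_nCDF μ hxs)
    calc (1 - nCDF 0 1 x) / (nCDF μ 1 s - nCDF μ 1 x) = nPDF 0 1 x / nPDF μ 1 x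
        ↔ (1 - nCDF 0 1 x) / (nCDF μ 1 s - nCDF μ 1 x) = Real.exp (μ^2/2 - μ*x) := by
          rw [nPDF_div]
      _ ↔ (1 - nCDF 0 1 x) = Real.exp (μ^2/2 - μ*x) * (nCDF μ 1 s - nCDF μ 1 x) :=
          div_eq_iff hd.ne'
      _ ↔ Real.exp (μ*x - μ^2/2) * (1 - nCDF 0 1 x) = nCDF μ 1 s - nCDF μ 1 x := by
          rw [show μ^2/2 - μ*x = -(μ*x - μ^2/2) by ring, Real.exp_neg]
          exact eq_inv_mul_iff_mul_eq₀ (Real.exp_ne_zero _)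
      _ ↔ H x = 0 := by
          simp only [hHdef]
          rw [mul_comm]
          constructor <;> intro h <;> linarith
      _ ↔ H x = H β := by rw [hβeq]
      _ ↔ x = β := hmono.injective.eq_iff
  · have hd_le : nCDF μ 1 s - nCDF μ 1 x ≤ 0 :=
      sub_nonpos.mpr ((strictMono_nCDF μ).monotone (not_lt.mp hxs))
    have hlhs : (1 - nCDF 0 1 x) / (nCDF μ 1 s - nCDF μ 1 x) ≤ 0 :=
      div_nonpos_of_nonneg_of_nonpos (by linarith [nCDF_lt_one 0 x]) hd_le
    have hrhs : 0 < nPDF 0 1 x / nPDF μ 1 x := div_pos (nPDF_pos 0 x) (nPDF_pos μ x)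
    constructor
    · intro h; rw [h] at hlhs; linarith
    · intro h; subst h; exact absurd hβs hxs
end

section
/- Let Q be a probability distribution on a finite set, N ≥ 2 and n, m natural numbers, and ν ∈ (0,1). Then L^𝓓_n(U_N, Q | ν, m·log₂N) ≥ L^𝓓_{min{n,m}}(U_N, Q | ν) and L^𝓜_n(U_N, Q | ν, m·log₂N) = L^𝓜_{min{n,m}}(U_N, Q | ν), where U_N is the uniform distribution on an N-element set. -/
open Filter MeasureTheory Topology

section Defs

variable {α β : Type*} [Fintype α] [Fintype β]

/-- `P` is a probability distribution on the finite type `α`. -/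
def IsProbDist (P : α → ℝ) : Prop := (∀ x, 0 ≤ P x) ∧ ∑ x, P x = 1

/-- Fidelity (Bhattacharyya coefficient) of two distributions on a finite set. -/
noncomputable def fid (P Q : α → ℝ) : ℝ := ∑ x, Real.sqrt (P x * Q x)

/-- Sum of the `l` largest values of `P` (for nonnegative `P`). -/
noncomputable def topSum (P : α → ℝ) (l : ℕ) : ℝ :=
  sSup {r : ℝ | ∃ S : Finset α, S.card ≤ l ∧ r = ∑ x ∈ S, P x}

/-- `P ≺ Q`: `P` is majorized by `Q` (the underlying finite sets may differ). -/
def MajorizedBy (P : α → ℝ) (Q : β → ℝ) : Prop := ∀ l : ℕ, topSum P l ≤ topSum Q l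

open Classical in
/-- Pushforward `W(P)` of the distribution `P` under a deterministic map `W`. -/
noncomputable def push (W : α → β) (P : α → ℝ) : β → ℝ :=
  fun y => ∑ x, if W x = y then P x else 0

/-- Maximal fidelity `F^𝓓(P → Q)` among deterministic conversions. -/
noncomputable def FD (P : α → ℝ) (Q : β → ℝ) : ℝ :=
  sSup {r : ℝ | ∃ W : α → β, r = fid (push W P) Q}

/-- Maximal fidelity `F^𝓓(P → Q | ·)` among deterministic conversions routed
through a storage set with `M` elements (a storage of `N` bits has `M = 2^N`). -/
noncomputable def FDstore (P : α → ℝ) (Q : β → ℝ) (M : ℕ) : ℝ :=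
  sSup {r : ℝ | ∃ W : α → Fin M, ∃ W' : Fin M → β, r = fid (push W' (push W P)) Q}

/-- Maximal fidelity `F^𝓜(P → Q)` among majorization conversions. -/
noncomputable def FM (P : α → ℝ) (Q : β → ℝ) : ℝ :=
  sSup {r : ℝ | ∃ P'' : β → ℝ, IsProbDist P'' ∧ MajorizedBy P P'' ∧ r = fid P'' Q}

/-- Maximal fidelity `F^𝓜(P → Q | ·)` among majorization conversions routed
through a storage set with `M` elements (a storage of `N` bits has `M = 2^N`). -/
noncomputable def FMstore (P : α → ℝ) (Q : β → ℝ) (M : ℕ) : ℝ :=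
  sSup {r : ℝ | ∃ P' : Fin M → ℝ, ∃ P'' : β → ℝ,
    IsProbDist P' ∧ IsProbDist P'' ∧ MajorizedBy P P' ∧ MajorizedBy P' P'' ∧
    r = fid P'' Q}

/-- The `n`-fold i.i.d. distribution `P^n`. -/
noncomputable def iid (P : α → ℝ) (n : ℕ) : (Fin n → α) → ℝ := fun f => ∏ i, P (f i)

/-- The uniform distribution `U_N` on an `N`-element set. -/
noncomputable def unif (N : ℕ) : Fin N → ℝ := fun _ => (N : ℝ)⁻¹

/-- Shannon entropy `H(P)` (base-2 logarithm). -/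
noncomputable def ent (P : α → ℝ) : ℝ := -∑ x, P x * Real.logb 2 (P x)

/-- The varentropy `V(P) = Σ_x P(x)(−log₂P(x) − H(P))²`. -/
noncomputable def varInfo (P : α → ℝ) : ℝ :=
  ∑ x, P x * (-Real.logb 2 (P x) - ent P) ^ 2

/-- `L^𝓓(P, Q | ν)`: maximal number of copies of `Q` obtainable from `P` by a
deterministic conversion with fidelity at least `ν`. -/
noncomputable def LD (P : α → ℝ) (Q : β → ℝ) (ν : ℝ) : ℕ :=
  sSup {L : ℕ | ν ≤ FD P (iid Q L)}

/-- `L^𝓜(P, Q | ν)`. -/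
noncomputable def LM (P : α → ℝ) (Q : β → ℝ) (ν : ℝ) : ℕ :=
  sSup {L : ℕ | ν ≤ FM P (iid Q L)}

/-- `L^𝓓(P, Q | ν, ·)` via a storage set with `M` elements. -/
noncomputable def LDstore (P : α → ℝ) (Q : β → ℝ) (ν : ℝ) (M : ℕ) : ℕ :=
  sSup {L : ℕ | ν ≤ FDstore P (iid Q L) M}

/-- `L^𝓜(P, Q | ν, ·)` via a storage set with `M` elements. -/
noncomputable def LMstore (P : α → ℝ) (Q : β → ℝ) (ν : ℝ) (M : ℕ) : ℕ :=
  sSup {L : ℕ | ν ≤ FMstore P (iid Q L) M}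

/-- The `j`-th largest value `P↓(j)` of `P` (1-indexed; `0` for `j > |α|`). -/
noncomputable def sortedVal (P : α → ℝ) (j : ℕ) : ℝ := topSum P j - topSum P (j - 1)

/-- The index `J_{P,M}`. -/
noncomputable def JPM (P : α → ℝ) (M : ℕ) : ℕ :=
  sSup ({0} ∪ {j : ℕ | 1 ≤ j ∧ j ≤ M - 1 ∧
    ((∑ x, P x) - topSum P j) / ((M : ℝ) - (j : ℝ)) < sortedVal P j})

open Classical in
/-- The distribution `𝒞_M(P)` on an `M`-element set. -/
noncomputable def CM (P : α → ℝ) (M : ℕ) : Fin M → ℝ := fun j =>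
  if (j : ℕ) + 1 ≤ JPM P M then sortedVal P ((j : ℕ) + 1)
  else ((∑ x, P x) - topSum P (JPM P M)) / ((M : ℝ) - (JPM P M : ℝ))

end Defs


section Helpers

open Finset
open scoped Classical

variable {α β γ : Type*} [Fintype α] [Fintype β] [Fintype γ]

lemma push_sum_subset (W : α → β) (P : α → ℝ) (T : Finset β) :
    ∑ y ∈ T, push W P y = ∑ x ∈ univ.filter (fun x => W x ∈ T), P x := by
  classical
  unfold push
  rw [Finset.sum_comm, Finset.sum_filter]
  refine Finset.sum_congr rfl (fun x _ => ?_)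
  simp

lemma push_apply' (W : α → β) (P : α → ℝ) (y : β) :
    push W P y = ∑ x ∈ univ.filter (fun x => W x = y), P x := by
  classical
  have := push_sum_subset W P {y}
  simpa using this

lemma push_nonneg {P : α → ℝ} (hP : ∀ x, 0 ≤ P x) (W : α → β) (y : β) : 0 ≤ push W P y := by
  classical
  rw [push_apply']
  exact Finset.sum_nonneg (fun x _ => hP x)

lemma sum_push_univ (W : α → β) (P : α → ℝ) : ∑ y, push W P y = ∑ x, P x := by
  classical
  have := push_sum_subset W P univ
  simpa using this

lemma push_isProbDist {P : α → ℝ} (hP : IsProbDist P) (W : α → β) : IsProbDist (push W P) :=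
  ⟨push_nonneg hP.1 W, by rw [sum_push_univ, hP.2]⟩

lemma push_push (W : α → β) (W' : β → γ) (P : α → ℝ) :
    push W' (push W P) = push (fun x => W' (W x)) P := by
  classical
  funext z
  have hfil : (univ.filter fun x => W x ∈ univ.filter fun y => W' y = z)
      = (univ.filter fun x => W' (W x) = z) := by
    ext x; simp
  rw [push_apply' W' (push W P) z, push_sum_subset, hfil, push_apply']

lemma prob_le_one {P : α → ℝ} (hP : IsProbDist P) (x : α) : P x ≤ 1 := by
  rw [← hP.2]
  exact Finset.single_le_sum (fun i _ => hP.1 i) (mem_univ x)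

lemma fid_le_one {P Q : α → ℝ} (hP : IsProbDist P) (hQ : IsProbDist Q) : fid P Q ≤ 1 := by
  have h : ∀ x, Real.sqrt (P x * Q x) ≤ (P x + Q x) / 2 := by
    intro x
    nlinarith [Real.sq_sqrt (mul_nonneg (hP.1 x) (hQ.1 x)), Real.sqrt_nonneg (P x * Q x),
      sq_nonneg (P x - Q x), sq_nonneg (Real.sqrt (P x * Q x) - (P x + Q x) / 2),
      hP.1 x, hQ.1 x]
  calc fid P Q ≤ ∑ x, (P x + Q x) / 2 := Finset.sum_le_sum (fun x _ => h x)
    _ = 1 := by rw [← Finset.sum_div, Finset.sum_add_distrib, hP.2, hQ.2]; norm_num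

lemma topSumSet_nonempty (P : α → ℝ) (l : ℕ) :
    {r : ℝ | ∃ S : Finset α, S.card ≤ l ∧ r = ∑ x ∈ S, P x}.Nonempty :=
  ⟨0, ∅, by simp⟩

lemma topSumSet_bddAbove {P : α → ℝ} (hP : ∀ x, 0 ≤ P x) (l : ℕ) :
    BddAbove {r : ℝ | ∃ S : Finset α, S.card ≤ l ∧ r = ∑ x ∈ S, P x} := by
  refine ⟨∑ x, P x, ?_⟩
  rintro r ⟨S, -, rfl⟩
  exact Finset.sum_le_sum_of_subset_of_nonneg (subset_univ S) (fun i _ _ => hP i)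

lemma le_topSum {P : α → ℝ} (hP : ∀ x, 0 ≤ P x) {l : ℕ} {S : Finset α} (hS : S.card ≤ l) :
    ∑ x ∈ S, P x ≤ topSum P l :=
  le_csSup (topSumSet_bddAbove hP l) ⟨S, hS, rfl⟩

lemma topSum_le {P : α → ℝ} {l : ℕ} {c : ℝ}
    (h : ∀ S : Finset α, S.card ≤ l → ∑ x ∈ S, P x ≤ c) : topSum P l ≤ c := by
  refine csSup_le (topSumSet_nonempty P l) ?_
  rintro r ⟨S, hS, rfl⟩
  exact h S hS

lemma topSum_le_total {P : α → ℝ} (hP : ∀ x, 0 ≤ P x) (l : ℕ) : topSum P l ≤ ∑ x, P x :=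
  topSum_le (fun S _ => Finset.sum_le_sum_of_subset_of_nonneg (subset_univ S) (fun i _ _ => hP i))

lemma topSum_zero (P : α → ℝ) : topSum P 0 = 0 := by
  have h : {r : ℝ | ∃ S : Finset α, S.card ≤ 0 ∧ r = ∑ x ∈ S, P x} = {0} := by
    ext r
    constructor
    · rintro ⟨S, hS, rfl⟩
      have : S = ∅ := Finset.card_eq_zero.1 (Nat.le_zero.1 hS)
      simp [this]
    · rintro rfl
      exact ⟨∅, by simp⟩
  rw [topSum, h, csSup_singleton]

lemma le_topSum_single {P : α → ℝ} (hP : ∀ x, 0 ≤ P x) (x : α) {l : ℕ} (hl : 1 ≤ l) :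
    P x ≤ topSum P l := by
  have := le_topSum hP (S := {x}) (by simpa using hl)
  simpa using this

lemma topSum_push_ge {P : α → ℝ} (hP : ∀ x, 0 ≤ P x) (W : α → β) (l : ℕ) :
    topSum P l ≤ topSum (push W P) l := by
  classical
  refine topSum_le (fun S hS => ?_)
  calc ∑ x ∈ S, P x ≤ ∑ x ∈ univ.filter (fun x => W x ∈ S.image W), P x := by
        refine Finset.sum_le_sum_of_subset_of_nonneg ?_ (fun i _ _ => hP i)
        intro x hx
        simp only [Finset.mem_filter, Finset.mem_univ, true_and, Finset.mem_image]
        exact ⟨x, hx, rfl⟩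
    _ = ∑ y ∈ S.image W, push W P y := (push_sum_subset W P (S.image W)).symm
    _ ≤ topSum (push W P) l := le_topSum (push_nonneg hP W) (le_trans Finset.card_image_le hS)

lemma topSum_push_inj {P : α → ℝ} (hP : ∀ x, 0 ≤ P x) {W : α → β}
    (hW : Function.Injective W) (l : ℕ) : topSum (push W P) l ≤ topSum P l := by
  classical
  refine topSum_le (fun T hT => ?_)
  rw [push_sum_subset]
  refine le_topSum hP (le_trans (Finset.card_le_card_of_injOn W
    (fun x hx => (Finset.mem_filter.1 hx).2) (fun a _ b _ h => hW h)) hT)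

lemma iid_nonneg {P : α → ℝ} (hP : ∀ x, 0 ≤ P x) (k : ℕ) (f : Fin k → α) :
    0 ≤ iid P k f :=
  Finset.prod_nonneg (fun i _ => hP (f i))

lemma iid_isProbDist {P : α → ℝ} (hP : IsProbDist P) (k : ℕ) : IsProbDist (iid P k) := by
  classical
  refine ⟨iid_nonneg hP.1 k, ?_⟩
  have h := Finset.prod_univ_sum (fun _ : Fin k => (univ : Finset α)) (fun _ x => P x)
  rw [Fintype.piFinset_univ] at h
  calc ∑ f : Fin k → α, iid P k f = ∏ _i : Fin k, ∑ x, P x := h.symm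
    _ = 1 := by rw [hP.2]; simp

lemma unif_isProbDist {N : ℕ} (hN : 0 < N) : IsProbDist (unif N) := by
  constructor
  · intro x
    simp only [unif]
    positivity
  · simp only [unif, Finset.sum_const, Finset.card_univ, Fintype.card_fin, nsmul_eq_mul]
    rw [mul_inv_cancel₀]
    exact_mod_cast hN.ne'

lemma iid_unif_apply {N k : ℕ} (f : Fin k → Fin N) :
    iid (unif N) k f = (((N : ℕ) ^ k : ℕ) : ℝ)⁻¹ := by
  simp [iid, unif, Finset.prod_const, inv_pow]

lemma topSum_iid_unif {N : ℕ} (hN : 0 < N) (k l : ℕ) :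
    topSum (iid (unif N) k) l = ((min l (N ^ k) : ℕ) : ℝ) / ((N ^ k : ℕ) : ℝ) := by
  have hNk : (0 : ℝ) < ((N ^ k : ℕ) : ℝ) := by positivity
  have hval : ∀ S : Finset (Fin k → Fin N),
      ∑ f ∈ S, iid (unif N) k f = (S.card : ℝ) / ((N ^ k : ℕ) : ℝ) := by
    intro S
    rw [Finset.sum_congr rfl (fun f _ => iid_unif_apply f), Finset.sum_const, nsmul_eq_mul,
      div_eq_mul_inv]
  apply le_antisymm
  · refine topSum_le (fun S hS => ?_)
    rw [hval]
    have h1 : S.card ≤ min l (N ^ k) := by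
      refine le_min hS ?_
      have h2 := Finset.card_le_univ S
      rwa [Fintype.card_fun, Fintype.card_fin, Fintype.card_fin] at h2
    gcongr

  · obtain ⟨S, -, hScard⟩ := Finset.exists_subset_card_eq (s := (univ : Finset (Fin k → Fin N)))
      (n := min l (N ^ k)) (by
        rw [Finset.card_univ, Fintype.card_fun, Fintype.card_fin, Fintype.card_fin]
        exact min_le_right _ _)
    have := le_topSum (iid_nonneg (unif_isProbDist hN).1 k)
      (S := S) (hScard.le.trans (min_le_left _ _))
    rwa [hval, hScard] at this

lemma min_div_min_le {l A B : ℕ} (hA : 0 < A) (hAB : A ≤ B) :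
    ((min l B : ℕ) : ℝ) / (B : ℝ) ≤ ((min l A : ℕ) : ℝ) / (A : ℝ) := by
  have hB : 0 < B := lt_of_lt_of_le hA hAB
  have hA' : (0 : ℝ) < (A : ℝ) := by exact_mod_cast hA
  have hB' : (0 : ℝ) < (B : ℝ) := by exact_mod_cast hB
  rcases le_total l A with h | h
  · rw [min_eq_left h, min_eq_left (le_trans h hAB)]
    exact div_le_div_of_nonneg_left (by positivity) hA' (by exact_mod_cast hAB)
  · rw [min_eq_right h, div_self hA'.ne']
    rw [div_le_one hB']
    exact_mod_cast min_le_right l B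

lemma topSum_ge_card {M : ℕ} (hM : 0 < M) {P : Fin M → ℝ} (hP : IsProbDist P) (l : ℕ) :
    ((min l M : ℕ) : ℝ) / (M : ℝ) ≤ topSum P l := by
  have hM' : (0 : ℝ) < (M : ℝ) := by exact_mod_cast hM
  have key : ∀ s : ℕ, s ≤ M →
      ∃ S : Finset (Fin M), S.card = s ∧ (s : ℝ) / (M : ℝ) ≤ ∑ x ∈ S, P x := by
    intro s
    induction s with
    | zero => intro _; exact ⟨∅, by simp⟩
    | succ s ih =>
      intro hs
      obtain ⟨S, hcard, hsum⟩ := ih (by omega)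
      have hco : (Sᶜ : Finset (Fin M)).Nonempty := by
        rw [← Finset.card_pos, Finset.card_compl, hcard, Fintype.card_fin]
        omega
      have hsumco : ∑ y ∈ Sᶜ, P y = 1 - ∑ x ∈ S, P x := by
        have h := Finset.sum_add_sum_compl S P
        rw [hP.2] at h
        linarith
      have hds : (0 : ℝ) < (M : ℝ) - s := by
        have : (s : ℝ) + 1 ≤ (M : ℝ) := by exact_mod_cast hs
        linarith
      have havg : ∑ _y ∈ Sᶜ, ((1 - ∑ x ∈ S, P x) / ((M : ℝ) - s)) ≤ ∑ y ∈ Sᶜ, P y := by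
        rw [Finset.sum_const, Finset.card_compl, hcard, Fintype.card_fin, hsumco, nsmul_eq_mul]
        have hcast : ((M - s : ℕ) : ℝ) = (M : ℝ) - s := by
          rw [Nat.cast_sub (by omega)]
        rw [hcast, mul_div_cancel₀ _ hds.ne']
      obtain ⟨x, hxmem, hx⟩ := Finset.exists_le_of_sum_le hco havg
      have hxS : x ∉ S := Finset.mem_compl.1 hxmem
      refine ⟨insert x S, by rw [Finset.card_insert_of_notMem hxS, hcard], ?_⟩
      rw [Finset.sum_insert hxS]
      set t := ∑ x ∈ S, P x with ht
      have h2 : (s : ℝ) ≤ t * M := by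
        have := (div_le_iff₀ hM').1 hsum
        linarith
      have step1 : ((s : ℝ) + 1) / (M : ℝ) ≤ (1 - t) / ((M : ℝ) - s) + t := by
        rw [div_add' _ _ _ hds.ne', div_le_div_iff₀ hM' hds]
        nlinarith [mul_nonneg (sub_nonneg.2 h2)
          (show (0 : ℝ) ≤ (M : ℝ) - s - 1 by
            have : (s : ℝ) + 1 ≤ (M : ℝ) := by exact_mod_cast hs
            linarith)]
      have : ((s : ℝ) + 1) / (M : ℝ) ≤ P x + t := le_trans step1 (by linarith [hx])
      calc ((s + 1 : ℕ) : ℝ) / (M : ℝ) = ((s : ℝ) + 1) / (M : ℝ) := by push_cast; ring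
        _ ≤ P x + t := this
  obtain ⟨S, hcard, hsum⟩ := key (min l M) (min_le_right _ _)
  refine le_trans hsum (le_topSum hP.1 ?_)
  rw [hcard]
  exact min_le_left _ _

lemma card_fiber {k n N : ℕ} (h : k ≤ n) (g : Fin k → Fin N)
    [DecidablePred fun f : Fin n → Fin N => (fun i => f (Fin.castLE h i)) = g] :
    (univ.filter (fun f : Fin n → Fin N => (fun i => f (Fin.castLE h i)) = g)).card
      = N ^ (n - k) := by
  rw [← Fintype.card_subtype]
  have e : {f : Fin n → Fin N // (fun i => f (Fin.castLE h i)) = g} ≃ (Fin (n - k) → Fin N) :=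
    { toFun := fun f j => f.1 ⟨k + j.1, by omega⟩
      invFun := fun u => ⟨fun i => if hik : i.1 < k then g ⟨i.1, hik⟩
          else u ⟨i.1 - k, by omega⟩, by
        funext i
        have hik : ((Fin.castLE h i : Fin n) : ℕ) < k := i.2
        simp only [dif_pos hik]
        exact congrArg g (Fin.ext rfl)⟩
      left_inv := by
        intro f
        apply Subtype.ext
        funext i
        by_cases hik : i.1 < k
        · simp only [dif_pos hik]
          have h2 := congrFun f.2 ⟨i.1, hik⟩
          rw [← h2]
          exact congrArg f.1 (Fin.ext rfl)
        · simp only [dif_neg hik]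
          exact congrArg f.1 (Fin.ext (show k + (i.1 - k) = i.1 by omega))
      right_inv := by
        intro u
        funext j
        have hnk : ¬ (k + j.1) < k := by omega
        simp only [dif_neg hnk]
        exact congrArg u (Fin.ext (show (k + j.1) - k = j.1 by omega))
      }
  rw [Fintype.card_congr e, Fintype.card_fun, Fintype.card_fin, Fintype.card_fin]

lemma push_castLE_iid_unif {N : ℕ} (hN : 0 < N) {k n : ℕ} (h : k ≤ n) :
    push (fun f : Fin n → Fin N => fun i => f (Fin.castLE h i)) (iid (unif N) n)
      = iid (unif N) k := by
  classical
  funext g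
  rw [push_apply', Finset.sum_congr rfl (fun f _ => iid_unif_apply f), Finset.sum_const]
  have hcc : ∀ inst : DecidablePred fun f : Fin n → Fin N => (fun i => f (Fin.castLE h i)) = g,
      (@Finset.filter _ _ inst univ).card = N ^ (n - k) := fun inst => @card_fiber k n N h g inst
  rw [hcc _, iid_unif_apply, nsmul_eq_mul]
  have hsplit : ((N : ℕ) ^ n : ℕ) = (N ^ k) * (N ^ (n - k)) := by
    rw [← pow_add]
    congr 1
    omega
  have hN0 : ((N : ℕ) : ℝ) ≠ 0 := by exact_mod_cast hN.ne'
  rw [hsplit]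
  push_cast
  field_simp

lemma exists_encdec (M : ℕ) [Nonempty α] (hcard : Fintype.card α ≤ M) :
    ∃ (e : α → Fin M) (d : Fin M → α), Function.Injective e ∧ ∀ x, d (e x) = x := by
  have hM : Fintype.card α ≤ Fintype.card (Fin M) := by rwa [Fintype.card_fin]
  obtain ⟨e⟩ := Function.Embedding.nonempty_of_card_le hM
  exact ⟨e, Function.invFun e, e.injective, fun x => Function.leftInverse_invFun e.injective x⟩

lemma sqrt_pow' {x : ℝ} (hx : 0 ≤ x) (n : ℕ) : Real.sqrt (x ^ n) = Real.sqrt x ^ n := by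
  induction n with
  | zero => simp
  | succ n ih => rw [pow_succ, pow_succ, Real.sqrt_mul (pow_nonneg hx n), ih]

lemma one_le_fid_push_const {P : α → ℝ} (hP : IsProbDist P) {Q : β → ℝ}
    (hQn : ∀ y, 0 ≤ Q y) {b : β} (hb : Q b = 1) :
    1 ≤ fid (push (fun _ => b) P) Q := by
  classical
  have h1 : push (fun _ => b) P b = 1 := by
    rw [push_apply',
      show (univ.filter fun x : α => (fun _ : α => b) x = b) = univ from
        Finset.filter_true_of_mem (fun x _ => rfl)]
    exact hP.2
  have h2 : Real.sqrt (push (fun _ => b) P b * Q b) ≤ fid (push (fun _ => b) P) Q :=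
    Finset.single_le_sum (f := fun y => Real.sqrt (push (fun _ => b) P y * Q y))
      (fun y _ => Real.sqrt_nonneg _) (mem_univ b)
  rw [h1, hb, one_mul, Real.sqrt_one] at h2
  exact h2

end Helpers

/-- Proposition (opt trans cor): for the uniform source `U_N`,
`L^𝓓_n(U_N, Q | ν, m·log₂N) ≥ L^𝓓_{min{n,m}}(U_N, Q | ν)` and
`L^𝓜_n(U_N, Q | ν, m·log₂N) = L^𝓜_{min{n,m}}(U_N, Q | ν)`, where a storage of
`m·log₂N` bits is a storage set with `N^m` elements. -/
theorem L_unif_store {β : Type*} [Fintype β] (N : ℕ) (hN : 2 ≤ N)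
    (Q : β → ℝ) (hQ : IsProbDist Q) (n m : ℕ) (ν : ℝ) (hν : ν ∈ Set.Ioo (0 : ℝ) 1) :
    LD (iid (unif N) (min n m)) Q ν ≤ LDstore (iid (unif N) n) Q ν (N ^ m) ∧
    LMstore (iid (unif N) n) Q ν (N ^ m) = LM (iid (unif N) (min n m)) Q ν := by
  classical
  obtain ⟨hν0, hν1⟩ := hν
  have hN0 : 0 < N := by omega
  have hNm0 : 0 < N ^ m := pow_pos hN0 m
  have hβ : Nonempty β := by
    by_contra hb
    rw [not_nonempty_iff] at hb
    have h2 := hQ.2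
    rw [Finset.univ_eq_empty, Finset.sum_empty] at h2
    norm_num at h2
  have hβL : ∀ L : ℕ, Nonempty (Fin L → β) := fun L => ⟨fun _ => Classical.choice hβ⟩
  have hNe : Nonempty (Fin (min n m) → Fin N) := ⟨fun _ => ⟨0, hN0⟩⟩
  have hUn : IsProbDist (iid (unif N) n) := iid_isProbDist (unif_isProbDist hN0) n
  have hUk : IsProbDist (iid (unif N) (min n m)) := iid_isProbDist (unif_isProbDist hN0) _
  have hQL : ∀ L : ℕ, IsProbDist (iid Q L) := fun L => iid_isProbDist hQ L
  have hcard : Fintype.card (Fin (min n m) → Fin N) ≤ N ^ m := by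
    rw [Fintype.card_fun, Fintype.card_fin, Fintype.card_fin]
    exact Nat.pow_le_pow_right (by omega) (min_le_right n m)
  obtain ⟨enc, dec, hencInj, hdec⟩ := exists_encdec (N ^ m) hcard
  have hbddD : ∀ L : ℕ, BddAbove {r : ℝ | ∃ W : (Fin (min n m) → Fin N) → (Fin L → β),
      r = fid (push W (iid (unif N) (min n m))) (iid Q L)} := by
    intro L
    refine ⟨1, ?_⟩
    rintro r ⟨W, rfl⟩
    exact fid_le_one (push_isProbDist hUk W) (hQL L)
  have hbddDst : ∀ L : ℕ, BddAbove {r : ℝ | ∃ W : (Fin n → Fin N) → Fin (N ^ m),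
      ∃ W' : Fin (N ^ m) → (Fin L → β),
      r = fid (push W' (push W (iid (unif N) n))) (iid Q L)} := by
    intro L
    refine ⟨1, ?_⟩
    rintro r ⟨W, W', rfl⟩
    exact fid_le_one (push_isProbDist (push_isProbDist hUn W) W') (hQL L)
  have hDle : ∀ L : ℕ, FD (iid (unif N) (min n m)) (iid Q L)
      ≤ FDstore (iid (unif N) n) (iid Q L) (N ^ m) := by
    intro L
    unfold FD FDstore
    refine csSup_le_csSup (hbddDst L) ?_ ?_
    · exact ⟨fid (push (fun _ => Classical.choice (hβL L)) (iid (unif N) (min n m))) (iid Q L),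
        fun _ => Classical.choice (hβL L), rfl⟩
    · rintro r ⟨W, rfl⟩
      refine ⟨fun f => enc (fun i => f (Fin.castLE (min_le_left n m) i)), fun z => W (dec z), ?_⟩
      have key : push W (iid (unif N) (min n m))
          = push (fun z => W (dec z)) (push (fun f : Fin n → Fin N =>
              enc (fun i => f (Fin.castLE (min_le_left n m) i))) (iid (unif N) n)) := by
        calc push W (iid (unif N) (min n m))
            = push W (push (fun f : Fin n → Fin N =>
                fun i => f (Fin.castLE (min_le_left n m) i)) (iid (unif N) n)) := by
              rw [push_castLE_iid_unif hN0 (min_le_left n m)]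
          _ = push (fun f : Fin n → Fin N =>
                W (fun i => f (Fin.castLE (min_le_left n m) i))) (iid (unif N) n) :=
              push_push _ _ _
          _ = push (fun f : Fin n → Fin N =>
                W (dec (enc (fun i => f (Fin.castLE (min_le_left n m) i))))) (iid (unif N) n) := by
              have harg : (fun f : Fin n → Fin N =>
                    W (fun i => f (Fin.castLE (min_le_left n m) i)))
                  = (fun f : Fin n → Fin N =>
                    W (dec (enc (fun i => f (Fin.castLE (min_le_left n m) i))))) := by
                funext f
                rw [hdec]
              rw [harg]
          _ = _ := (push_push (fun f : Fin n → Fin N =>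
                enc (fun i => f (Fin.castLE (min_le_left n m) i)))
                (fun z => W (dec z)) (iid (unif N) n)).symm
      rw [key]
  have hDsub : {L : ℕ | ν ≤ FD (iid (unif N) (min n m)) (iid Q L)}
      ⊆ {L : ℕ | ν ≤ FDstore (iid (unif N) n) (iid Q L) (N ^ m)} :=
    fun L hL => le_trans hL (hDle L)
  have hMeq : ∀ L : ℕ, FMstore (iid (unif N) n) (iid Q L) (N ^ m)
      = FM (iid (unif N) (min n m)) (iid Q L) := by
    intro L
    unfold FMstore FM
    congr 1
    ext r
    constructor
    · rintro ⟨P', P'', hP', hP'', hmaj1, hmaj2, rfl⟩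
      refine ⟨P'', hP'', ?_, rfl⟩
      intro l
      refine le_trans ?_ (hmaj2 l)
      rw [topSum_iid_unif hN0]
      rcases le_total n m with hnm | hnm
      · rw [min_eq_left hnm]
        have h5 := hmaj1 l
        rw [topSum_iid_unif hN0] at h5
        exact h5
      · rw [min_eq_right hnm]
        exact topSum_ge_card hNm0 hP' l
    · rintro ⟨P'', hP'', hmaj, rfl⟩
      refine ⟨push enc (iid (unif N) (min n m)), P'', push_isProbDist hUk enc, hP'', ?_, ?_, rfl⟩
      · intro l
        refine le_trans ?_ (topSum_push_ge hUk.1 enc l)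
        rw [topSum_iid_unif hN0, topSum_iid_unif hN0]
        exact min_div_min_le (pow_pos hN0 _) (Nat.pow_le_pow_right (by omega) (min_le_left n m))
      · intro l
        exact le_trans (topSum_push_inj hUk.1 hencInj l) (hmaj l)
  have hMsets : {L : ℕ | ν ≤ FMstore (iid (unif N) n) (iid Q L) (N ^ m)}
      = {L : ℕ | ν ≤ FM (iid (unif N) (min n m)) (iid Q L)} := by
    ext L
    simp only [Set.mem_setOf_eq, hMeq L]
  constructor
  · -- deterministic part
    by_cases hpoint : ∃ y0, Q y0 = 1
    · obtain ⟨y0, hy0⟩ := hpoint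
      have hDuniv : {L : ℕ | ν ≤ FD (iid (unif N) (min n m)) (iid Q L)} = Set.univ := by
        refine Set.eq_univ_of_forall (fun L => ?_)
        have hQL1 : iid Q L (fun _ => y0) = 1 := by simp [iid, hy0]
        have h1 : 1 ≤ fid (push (fun _ : Fin (min n m) → Fin N => (fun _ => y0 : Fin L → β))
            (iid (unif N) (min n m))) (iid Q L) :=
          one_le_fid_push_const hUk (iid_nonneg hQ.1 L) hQL1
        have h2 : fid (push (fun _ : Fin (min n m) → Fin N => (fun _ => y0 : Fin L → β))
            (iid (unif N) (min n m))) (iid Q L) ≤ FD (iid (unif N) (min n m)) (iid Q L) :=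
          le_csSup (hbddD L) ⟨_, rfl⟩
        exact le_trans (le_of_lt hν1) (le_trans h1 h2)
      have hDstuniv : {L : ℕ | ν ≤ FDstore (iid (unif N) n) (iid Q L) (N ^ m)} = Set.univ := by
        refine Set.eq_univ_of_forall (fun L => ?_)
        have hQL1 : iid Q L (fun _ => y0) = 1 := by simp [iid, hy0]
        have h1 : 1 ≤ fid (push (fun _ : Fin n → Fin N => (fun _ => y0 : Fin L → β))
            (iid (unif N) n)) (iid Q L) :=
          one_le_fid_push_const hUn (iid_nonneg hQ.1 L) hQL1
        refine le_trans (le_of_lt hν1) (le_trans h1 ?_)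
        calc fid (push (fun _ : Fin n → Fin N => (fun _ => y0 : Fin L → β))
              (iid (unif N) n)) (iid Q L)
            = fid (push (fun _ : Fin (N ^ m) => (fun _ => y0 : Fin L → β))
                (push (fun _ : Fin n → Fin N => (⟨0, hNm0⟩ : Fin (N ^ m)))
                  (iid (unif N) n))) (iid Q L) := by rw [push_push]
          _ ≤ FDstore (iid (unif N) n) (iid Q L) (N ^ m) := le_csSup (hbddDst L) ⟨_, _, rfl⟩
      unfold LD LDstore
      rw [hDuniv, hDstuniv]
    · push_neg at hpoint
      have hQlt : ∀ y, Q y < 1 := fun y => lt_of_le_of_ne (prob_le_one hQ y) (hpoint y)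
      obtain ⟨y1, -, hy1⟩ := Finset.exists_max_image Finset.univ Q
        ⟨Classical.choice hβ, Finset.mem_univ _⟩
      have hq0 : 0 ≤ Q y1 := hQ.1 y1
      have hq1 : Q y1 < 1 := hQlt y1
      have hr0 : 0 ≤ Real.sqrt (Q y1) := Real.sqrt_nonneg _
      have hr1 : Real.sqrt (Q y1) < 1 := by
        have h5 := Real.sqrt_lt_sqrt hq0 hq1
        rwa [Real.sqrt_one] at h5
      have htend : Filter.Tendsto (fun L : ℕ => ((N ^ m : ℕ) : ℝ) * Real.sqrt (Q y1) ^ L)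
          Filter.atTop (nhds 0) := by
        have h5 := (tendsto_pow_atTop_nhds_zero_of_lt_one hr0 hr1).const_mul ((N ^ m : ℕ) : ℝ)
        simpa using h5
      have hev : ∀ᶠ L : ℕ in Filter.atTop, ((N ^ m : ℕ) : ℝ) * Real.sqrt (Q y1) ^ L < ν :=
        htend.eventually (Iio_mem_nhds hν0)
      obtain ⟨L0, hL0⟩ := Filter.eventually_atTop.1 hev
      have hbnd : ∀ L : ℕ, FDstore (iid (unif N) n) (iid Q L) (N ^ m)
          ≤ ((N ^ m : ℕ) : ℝ) * Real.sqrt (Q y1) ^ L := by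
        intro L
        unfold FDstore
        refine csSup_le ⟨_, fun _ => (⟨0, hNm0⟩ : Fin (N ^ m)),
          fun _ => (fun _ => Classical.choice hβ : Fin L → β), rfl⟩ ?_
        rintro r ⟨W, W', rfl⟩
        have hP'' : IsProbDist (push W' (push W (iid (unif N) n))) :=
          push_isProbDist (push_isProbDist hUn W) W'
        calc fid (push W' (push W (iid (unif N) n))) (iid Q L)
            ≤ ∑ y : Fin L → β, (if y ∈ Finset.univ.image W'
                then Real.sqrt (Q y1) ^ L else 0) := by
              refine Finset.sum_le_sum (fun y _ => ?_)
              by_cases hy : y ∈ Finset.univ.image W'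
              · rw [if_pos hy]
                have h1 : push W' (push W (iid (unif N) n)) y ≤ 1 := prob_le_one hP'' y
                have h2 : iid Q L y ≤ Q y1 ^ L := by
                  calc ∏ i, Q (y i) ≤ ∏ _i : Fin L, Q y1 :=
                        Finset.prod_le_prod (fun i _ => hQ.1 (y i))
                          (fun i _ => hy1 (y i) (Finset.mem_univ _))
                    _ = Q y1 ^ L := by
                        rw [Finset.prod_const, Finset.card_univ, Fintype.card_fin]
                calc Real.sqrt (push W' (push W (iid (unif N) n)) y * iid Q L y)
                    ≤ Real.sqrt (1 * Q y1 ^ L) := Real.sqrt_le_sqrt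
                      (mul_le_mul h1 h2 (iid_nonneg hQ.1 L y) zero_le_one)
                  _ = Real.sqrt (Q y1) ^ L := by rw [one_mul, sqrt_pow' hq0]
              · rw [if_neg hy]
                have hz : push W' (push W (iid (unif N) n)) y = 0 := by
                  rw [push_apply']
                  refine Finset.sum_eq_zero (fun z hz => ?_)
                  simp only [Finset.mem_filter] at hz
                  exact absurd (Finset.mem_image.2
                    ⟨z, Finset.mem_univ z, hz.2⟩) hy
                rw [hz, zero_mul, Real.sqrt_zero]
          _ = ((Finset.univ.image W').card : ℝ) * Real.sqrt (Q y1) ^ L := by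
              rw [Finset.sum_ite_mem, Finset.univ_inter, Finset.sum_const, nsmul_eq_mul]
          _ ≤ ((N ^ m : ℕ) : ℝ) * Real.sqrt (Q y1) ^ L := by
              refine mul_le_mul_of_nonneg_right ?_ (pow_nonneg hr0 L)
              have h6 := Finset.card_image_le (s := (Finset.univ : Finset (Fin (N ^ m)))) (f := W')
              rw [Finset.card_univ, Fintype.card_fin] at h6
              exact_mod_cast h6
      have hbddSet : BddAbove {L : ℕ | ν ≤ FDstore (iid (unif N) n) (iid Q L) (N ^ m)} := by
        refine ⟨L0, fun L hL => ?_⟩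
        by_contra hc
        push_neg at hc
        have h4 := hL0 L (by omega)
        have h5 := le_trans hL (hbnd L)
        linarith
      rcases Set.eq_empty_or_nonempty
          {L : ℕ | ν ≤ FD (iid (unif N) (min n m)) (iid Q L)} with he | hne
      · unfold LD
        rw [he, csSup_empty]
        exact bot_le
      · exact csSup_le_csSup hbddSet hne hDsub
  · -- majorization part
    unfold LMstore LM
    rw [hMsets]
end
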